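/- Let Q be a finite set of modes, f_q : ℝⁿ → ℝⁿ analytic vector fields, D_q, Ξ_q, Sᵘ_q ⊆ ℝⁿ, and E ⊆ Q × Q transitions with guards G_e ⊆ ℝⁿ and resets R_e : ℝⁿ → ℝⁿ. Suppose there are nonnegative reals c_{e,1}, c_{e,2}, c_{e,3}, c_{e,4} (e ∈ E), polynomials δ_q with δ_q(x) ≥ 0 for all x, and analytic functions φ_q, χ_q : ℝⁿ → ℝ and ψ_{q,1}, ψ_{q,2} : ℝ → ℝ such that for all q ∈ Q: χ_q(x) ≤ 0 and φ_q(x) ≤ 0 for all x ∈ Ξ_q; L_{f_q} χ_q(x) − ψ_{q,1}(χ_q(x)) ≤ 0 and L_{f_q} φ_q(x) − ψ_{q,2}(φ_q(x)) − δ_q(x)·χ_q(x) ≤ 0 for all x ∈ D_q; φ_q(x) > 0 for all x ∈ Sᵘ_q; for i = 1, 2, every analytic θ : [0,∞) → ℝ with θ′(t) = ψ_{q,i}(θ(t)) for all t ≥ 0 and θ(0) ≤ 0 satisfies θ(ξ) ≤ 0 for all ξ > 0, and for every c ≤ 0 such a solution with θ(0) = c exists; and for every e = (q,q′) ∈ E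 and x ∈ G_e: c_{e,1}·φ_q(x) − φ_{q′}(R_e(x)) ≥ 0, c_{e,2}·φ_q(x) − χ_{q′}(R_e(x)) ≥ 0, c_{e,3}·χ_q(x) − φ_{q′}(R_e(x)) ≥ 0 and c_{e,4}·χ_q(x) − χ_{q′}(R_e(x)) ≥ 0. Then for every finite hybrid execution (q₀,x₀),…,(q_l,x_l) with x₀ ∈ Ξ_{q₀}, where each step is either a discrete jump (e = (q_i,q_{i+1}) ∈ E, x_i ∈ G_e, x_{i+1} = R_e(x_i)) or a continuous evolution (q_i = q_{i+1} and there exist δ ≥ 0 and differentiable x : [0,δ] → ℝⁿ with x(0) = x_i, x(δ) = x_{i+1}, x′(t) = f_{q_i}(x(t)), x(t) ∈ D_{q_i} for all t ∈ [0,δ]), one has x_l ∉ Sᵘ_{q_l}. -/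

import Mathlib

open Set in
/-- Scalar ODE comparison: a subsolution stays below a solution. -/
lemma barrier_comparison (ψ : ℝ → ℝ) (hψ : ∀ y, AnalyticAt ℝ ψ y)
    (g g' θ : ℝ → ℝ) (d : ℝ)
    (hg : ∀ t ∈ Icc (0:ℝ) d, HasDerivAt g (g' t) t)
    (hgle : ∀ t ∈ Icc (0:ℝ) d, g' t ≤ ψ (g t))
    (hθ : ∀ t, AnalyticAt ℝ θ t)
    (hθ' : ∀ t ≥ (0:ℝ), deriv θ t = ψ (θ t))
    (h0 : g 0 ≤ θ 0) : ∀ t ∈ Icc (0:ℝ) d, g t ≤ θ t := by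
  rcases le_or_gt d 0 with hd | hd
  · intro t ht
    have : t = 0 := le_antisymm (ht.2.trans hd) ht.1
    simpa [this] using h0
  have hθd : ∀ t, HasDerivAt θ (deriv θ t) t :=
    fun t => ((hθ t).differentiableAt).hasDerivAt
  have hθc : Continuous θ :=
    continuous_iff_continuousAt.2 fun t => (hθd t).continuousAt
  -- bounds of θ on [0,d]
  obtain ⟨tM, htMm, htM⟩ := (isCompact_Icc (a := (0:ℝ)) (b := d)).exists_isMaxOn
    (nonempty_Icc.2 hd.le) hθc.continuousOn
  obtain ⟨tm, htmm, htm⟩ := (isCompact_Icc (a := (0:ℝ)) (b := d)).exists_isMinOn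
    (nonempty_Icc.2 hd.le) hθc.continuousOn
  have hmax : ∀ t ∈ Icc (0:ℝ) d, θ t ≤ θ tM := fun t ht => htM ht
  have hmin : ∀ t ∈ Icc (0:ℝ) d, θ tm ≤ θ t := fun t ht => htm ht
  set m := θ tm with hm
  set M := θ tM with hM
  set I : Set ℝ := Icc m (M + 1) with hI
  -- Lipschitz constant for ψ on I
  have hψC : ContDiff ℝ 1 ψ := contDiff_iff_contDiffAt.2 fun y => (hψ y).contDiffAt
  have hdc : Continuous fun y => |deriv ψ y| := (hψC.continuous_deriv le_rfl).abs
  have hIne : I.Nonempty := by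
    refine nonempty_Icc.2 ?_
    have := hmax tm htmm
    simp only [← hm, ← hM] at this
    linarith
  obtain ⟨y₀, _, hy₀⟩ := isCompact_Icc.exists_isMaxOn hIne hdc.continuousOn
  set K := |deriv ψ y₀| with hK
  have hK0 : 0 ≤ K := abs_nonneg _
  set L := K + 1 with hL
  have hL0 : 0 < L := by positivity
  -- Lipschitz estimate via MVT
  have hlip : ∀ a ∈ I, ∀ b ∈ I, ψ b - ψ a ≤ K * |b - a| := by
    intro a ha b hb
    have := Convex.norm_image_sub_le_of_norm_deriv_le
      (fun y _ => (hψ y).differentiableAt) (fun y hy => by simpa using hy₀ hy)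
      (convex_Icc _ _) ha hb
    rw [Real.norm_eq_abs, Real.norm_eq_abs] at this
    exact (le_abs_self _).trans this
  -- the ε-fencing argument
  have key : ∀ ε : ℝ, 0 < ε → ε ≤ Real.exp (-(L * d)) →
      ∀ t ∈ Icc (0:ℝ) d, g t ≤ θ t + ε * Real.exp (L * t) := by
    intro ε hε hεd
    have hB : ∀ t : ℝ, HasDerivAt (fun t => θ t + ε * Real.exp (L * t))
        (deriv θ t + ε * (Real.exp (L * t) * L)) t := by
      intro t
      have h1 : HasDerivAt (fun t : ℝ => L * t) L t := by
        simpa using (hasDerivAt_id t).const_mul L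
      have h2 : HasDerivAt (fun t : ℝ => Real.exp (L * t)) (Real.exp (L * t) * L) t :=
        (Real.hasDerivAt_exp (L * t)).comp t h1
      exact (hθd t).add (h2.const_mul ε)
    have := image_le_of_deriv_right_lt_deriv_boundary
      (f := g) (f' := g') (a := (0:ℝ)) (b := d)
      (fun t ht => (hg t ht).continuousAt.continuousWithinAt)
      (fun t ht => (hg t (Ico_subset_Icc_self ht)).hasDerivWithinAt)
      (B := fun t => θ t + ε * Real.exp (L * t))
      (B' := fun t => deriv θ t + ε * (Real.exp (L * t) * L))
      (by
        show g 0 ≤ θ 0 + ε * Real.exp (L * 0)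
        have : (0:ℝ) < ε * Real.exp (L * 0) := by positivity
        linarith)
      hB ?_
    · exact this
    · intro t ht heq
      set u := ε * Real.exp (L * t) with hu
      have hu0 : 0 < u := by positivity
      have hu1 : u ≤ 1 := by
        have h1 : Real.exp (L * t) ≤ Real.exp (L * d) :=
          Real.exp_le_exp.2 (mul_le_mul_of_nonneg_left ht.2.le hL0.le)
        calc u ≤ Real.exp (-(L * d)) * Real.exp (L * d) := by
              exact mul_le_mul hεd h1 (Real.exp_pos _).le (Real.exp_pos _).le
          _ = 1 := by rw [← Real.exp_add]; simp
      have hmx := hmax t (Ico_subset_Icc_self ht)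
      have hmn := hmin t (Ico_subset_Icc_self ht)
      have hθI : θ t ∈ I := ⟨hmn, by linarith⟩
      have hθuI : θ t + u ∈ I := ⟨by linarith, by linarith⟩
      have h1 : g' t ≤ ψ (g t) := hgle t (Ico_subset_Icc_self ht)
      have h2 : ψ (θ t + u) - ψ (θ t) ≤ K * u := by
        have := hlip (θ t) hθI (θ t + u) hθuI
        simpa [abs_of_pos hu0] using this
      have h3 : deriv θ t = ψ (θ t) := hθ' t ht.1
      have : g t = θ t + u := heq
      rw [this] at h1
      have : K * u < L * u := by
        have : (K : ℝ) < L := by simp [hL]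
        exact mul_lt_mul_of_pos_right this hu0
      calc g' t ≤ ψ (θ t + u) := h1
        _ ≤ ψ (θ t) + K * u := by linarith
        _ < ψ (θ t) + L * u := by linarith
        _ = deriv θ t + ε * (Real.exp (L * t) * L) := by
            rw [h3, hu]; ring_nf
  -- take ε → 0
  intro t ht
  refine le_of_forall_pos_le_add fun ε' hε' => ?_
  set ε := min (Real.exp (-(L * d))) (ε' * Real.exp (-(L * d))) with hε
  have hε0 : 0 < ε := lt_min (Real.exp_pos _) (by positivity)
  have h := key ε hε0 (min_le_left _ _) t ht
  have h1 : Real.exp (L * t) ≤ Real.exp (L * d) :=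
    Real.exp_le_exp.2 (mul_le_mul_of_nonneg_left ht.2 hL0.le)
  have h2 : ε * Real.exp (L * t) ≤ ε' := by
    calc ε * Real.exp (L * t) ≤ (ε' * Real.exp (-(L * d))) * Real.exp (L * d) :=
          mul_le_mul (min_le_right _ _) h1 (Real.exp_pos _).le (by positivity)
      _ = ε' := by rw [mul_assoc, ← Real.exp_add]; simp
  linarith



/-- Combined barrier certificates for hybrid systems: given a hybrid
automaton with modes `Q`, vector fields `f q`, mode domains `D q`, initial
sets `Ξ q`, unsafe sets `Su q`, transitions `E` with guards `G e` and
resets `R e`, if the families `χ q, φ q` (with comparison functions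
`ψ₁ q, ψ₂ q`, nonnegative polynomials `δ q` and nonnegative constants
`c₁ e, c₂ e, c₃ e, c₄ e`) satisfy the combined barrier conditions, then
the final state of every hybrid execution avoids the unsafe set. -/
theorem hybrid_combined_barrier_certificate {n : ℕ} (Q : Type*) [Fintype Q]
    (f : Q → (Fin n → ℝ) → (Fin n → ℝ))
    (D Ξ Su : Q → Set (Fin n → ℝ))
    (E : Set (Q × Q))
    (G : Q × Q → Set (Fin n → ℝ))
    (R : Q × Q → (Fin n → ℝ) → (Fin n → ℝ))
    (c₁ c₂ c₃ c₄ : Q × Q → ℝ)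
    (δ : Q → (Fin n → ℝ) → ℝ)
    (φ χ : Q → (Fin n → ℝ) → ℝ) (ψ₁ ψ₂ : Q → ℝ → ℝ)
    (hf : ∀ q x, AnalyticAt ℝ (f q) x)
    (hφa : ∀ q x, AnalyticAt ℝ (φ q) x)
    (hχa : ∀ q x, AnalyticAt ℝ (χ q) x)
    (hψ₁a : ∀ q y, AnalyticAt ℝ (ψ₁ q) y)
    (hψ₂a : ∀ q y, AnalyticAt ℝ (ψ₂ q) y)
    (hc₁ : ∀ e ∈ E, 0 ≤ c₁ e) (hc₂ : ∀ e ∈ E, 0 ≤ c₂ e)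
    (hc₃ : ∀ e ∈ E, 0 ≤ c₃ e) (hc₄ : ∀ e ∈ E, 0 ≤ c₄ e)
    (hδpoly : ∀ q, ∃ p : MvPolynomial (Fin n) ℝ,
      ∀ x, δ q x = MvPolynomial.eval x p)
    (hδ : ∀ q x, 0 ≤ δ q x)
    (hχ0 : ∀ q, ∀ x ∈ Ξ q, χ q x ≤ 0)
    (hφ0 : ∀ q, ∀ x ∈ Ξ q, φ q x ≤ 0)
    (hχD : ∀ q, ∀ x ∈ D q, fderiv ℝ (χ q) x (f q x) - ψ₁ q (χ q x) ≤ 0)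
    (hφD : ∀ q, ∀ x ∈ D q,
      fderiv ℝ (φ q) x (f q x) - ψ₂ q (φ q x) - δ q x * χ q x ≤ 0)
    (hU : ∀ q, ∀ x ∈ Su q, 0 < φ q x)
    (hcmp1a : ∀ q, ∀ θ : ℝ → ℝ, (∀ t, AnalyticAt ℝ θ t) →
      (∀ t ≥ (0:ℝ), deriv θ t = ψ₁ q (θ t)) → θ 0 ≤ 0 →
      ∀ ξ > (0:ℝ), θ ξ ≤ 0)
    (hcmp1b : ∀ q, ∀ c₀ ≤ (0:ℝ), ∃ θ : ℝ → ℝ, (∀ t, AnalyticAt ℝ θ t) ∧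
      (∀ t ≥ (0:ℝ), deriv θ t = ψ₁ q (θ t)) ∧ θ 0 = c₀)
    (hcmp2a : ∀ q, ∀ θ : ℝ → ℝ, (∀ t, AnalyticAt ℝ θ t) →
      (∀ t ≥ (0:ℝ), deriv θ t = ψ₂ q (θ t)) → θ 0 ≤ 0 →
      ∀ ξ > (0:ℝ), θ ξ ≤ 0)
    (hcmp2b : ∀ q, ∀ c₀ ≤ (0:ℝ), ∃ θ : ℝ → ℝ, (∀ t, AnalyticAt ℝ θ t) ∧
      (∀ t ≥ (0:ℝ), deriv θ t = ψ₂ q (θ t)) ∧ θ 0 = c₀)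
    (hjump1 : ∀ e ∈ E, ∀ x ∈ G e, 0 ≤ c₁ e * φ e.1 x - φ e.2 (R e x))
    (hjump2 : ∀ e ∈ E, ∀ x ∈ G e, 0 ≤ c₂ e * φ e.1 x - χ e.2 (R e x))
    (hjump3 : ∀ e ∈ E, ∀ x ∈ G e, 0 ≤ c₃ e * χ e.1 x - φ e.2 (R e x))
    (hjump4 : ∀ e ∈ E, ∀ x ∈ G e, 0 ≤ c₄ e * χ e.1 x - χ e.2 (R e x)) :
    ∀ (l : ℕ) (q : Fin (l + 1) → Q) (xs : Fin (l + 1) → (Fin n → ℝ)),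
      xs 0 ∈ Ξ (q 0) →
      (∀ i : Fin l,
        -- discrete jump
        ((q i.castSucc, q i.succ) ∈ E ∧
          xs i.castSucc ∈ G (q i.castSucc, q i.succ) ∧
          xs i.succ = R (q i.castSucc, q i.succ) (xs i.castSucc)) ∨
        -- continuous evolution
        (q i.castSucc = q i.succ ∧
          ∃ (d : ℝ) (x : ℝ → (Fin n → ℝ)), 0 ≤ d ∧
            x 0 = xs i.castSucc ∧ x d = xs i.succ ∧
            (∀ t ∈ Set.Icc (0:ℝ) d,
              HasDerivAt x (f (q i.castSucc) (x t)) t ∧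
              x t ∈ D (q i.castSucc)))) →
      xs (Fin.last l) ∉ Su (q (Fin.last l)) := by

  intro l q xs hx0 hstep
  -- the invariant: χ and φ are nonpositive along the execution
  have inv : ∀ i : Fin (l + 1), χ (q i) (xs i) ≤ 0 ∧ φ (q i) (xs i) ≤ 0 := by
    intro i
    induction i using Fin.induction with
    | zero => exact ⟨hχ0 _ _ hx0, hφ0 _ _ hx0⟩
    | succ i ih =>
      rcases hstep i with ⟨hE, hG, hR⟩ | ⟨hq, d, x, hd, hx0', hxd, hflow⟩
      · -- discrete jump
        obtain ⟨hχi, hφi⟩ := ih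
        have h2 := hjump2 _ hE _ hG
        have h1 := hjump1 _ hE _ hG
        have hc1 := hc₁ _ hE
        have hc2 := hc₂ _ hE
        rw [hR]
        constructor
        · nlinarith
        · nlinarith
      · -- continuous evolution
        obtain ⟨hχi, hφi⟩ := ih
        set q₀ := q i.castSucc with hq₀
        -- derivative of χ ∘ x and φ ∘ x
        have hxder : ∀ t ∈ Set.Icc (0:ℝ) d, HasDerivAt x (f q₀ (x t)) t :=
          fun t ht => (hflow t ht).1
        have hgχ : ∀ t ∈ Set.Icc (0:ℝ) d,
            HasDerivAt (fun t => χ q₀ (x t))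
              (fderiv ℝ (χ q₀) (x t) (f q₀ (x t))) t := fun t ht =>
          ((hχa q₀ (x t)).differentiableAt.hasFDerivAt).comp_hasDerivAt t (hxder t ht)
        have hgφ : ∀ t ∈ Set.Icc (0:ℝ) d,
            HasDerivAt (fun t => φ q₀ (x t))
              (fderiv ℝ (φ q₀) (x t) (f q₀ (x t))) t := fun t ht =>
          ((hφa q₀ (x t)).differentiableAt.hasFDerivAt).comp_hasDerivAt t (hxder t ht)
        -- comparison for χ
        obtain ⟨θ₁, hθ₁a, hθ₁', hθ₁0⟩ := hcmp1b q₀ (χ q₀ (xs i.castSucc)) hχi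
        have hθ₁n : ∀ t ∈ Set.Icc (0:ℝ) d, θ₁ t ≤ 0 := by
          intro t ht
          rcases eq_or_lt_of_le ht.1 with h | h
          · rw [← h, hθ₁0]; exact hχi
          · exact hcmp1a q₀ θ₁ hθ₁a hθ₁' (by rw [hθ₁0]; exact hχi) t h
        have hχflow : ∀ t ∈ Set.Icc (0:ℝ) d, χ q₀ (x t) ≤ 0 := by
          have hcomp := barrier_comparison (ψ₁ q₀) (hψ₁a q₀)
            (fun t => χ q₀ (x t)) (fun t => fderiv ℝ (χ q₀) (x t) (f q₀ (x t)))
            θ₁ d hgχ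
            (fun t ht => by
              have := hχD q₀ (x t) (hflow t ht).2
              linarith)
            hθ₁a hθ₁' (by show χ q₀ (x 0) ≤ θ₁ 0; rw [hx0', hθ₁0])
          intro t ht
          exact (hcomp t ht).trans (hθ₁n t ht)
        -- comparison for φ
        obtain ⟨θ₂, hθ₂a, hθ₂', hθ₂0⟩ := hcmp2b q₀ (φ q₀ (xs i.castSucc)) hφi
        have hθ₂n : ∀ t ∈ Set.Icc (0:ℝ) d, θ₂ t ≤ 0 := by
          intro t ht
          rcases eq_or_lt_of_le ht.1 with h | h
          · rw [← h, hθ₂0]; exact hφi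
          · exact hcmp2a q₀ θ₂ hθ₂a hθ₂' (by rw [hθ₂0]; exact hφi) t h
        have hφflow : ∀ t ∈ Set.Icc (0:ℝ) d, φ q₀ (x t) ≤ 0 := by
          have hcomp := barrier_comparison (ψ₂ q₀) (hψ₂a q₀)
            (fun t => φ q₀ (x t)) (fun t => fderiv ℝ (φ q₀) (x t) (f q₀ (x t)))
            θ₂ d hgφ
            (fun t ht => by
              have h1 := hφD q₀ (x t) (hflow t ht).2
              have h2 : δ q₀ (x t) * χ q₀ (x t) ≤ 0 :=
                mul_nonpos_of_nonneg_of_nonpos (hδ q₀ (x t)) (hχflow t ht)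
              linarith)
            hθ₂a hθ₂' (by show φ q₀ (x 0) ≤ θ₂ 0; rw [hx0', hθ₂0])
          intro t ht
          exact (hcomp t ht).trans (hθ₂n t ht)
        have hdmem : d ∈ Set.Icc (0:ℝ) d := ⟨hd, le_rfl⟩
        rw [← hq, ← hxd]
        exact ⟨hχflow d hdmem, hφflow d hdmem⟩
  intro hmem
  have := (inv (Fin.last l)).2
  have := hU _ _ hmem
  linarith
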